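/- arXiv:2007.09218 — 4 statements merged into one kernel-verified Lean document; each statement's English description precedes it below -/
import Mathlib

section
/- Let (H,R) be a quasitriangular bialgebra with a balance, i.e. an invertible central b ∈ H with ε(b)=1 and Δ(b) = (b⊗b)·R₂₁·R. Then H is almost cylindrical with twist pair (id, R₂₁⁻¹) and k = b, and all of H is cylindrically invariant. -/
noncomputable section
open TensorProduct

variable (F : Type*) [CommRing F] (H : Type*) [Ring H] [Bialgebra F H]

/-- The flip map on `H ⊗ H`. -/
def τ₂ : H ⊗[F] H ≃ₐ[F] H ⊗[F] H := Algebra.TensorProduct.comm F H H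

/-- Embedding of `H ⊗ H` into the first two factors of `(H ⊗ H) ⊗ H`. -/
def ι₁₂ : H ⊗[F] H →ₐ[F] (H ⊗[F] H) ⊗[F] H := Algebra.TensorProduct.includeLeft

/-- Embedding of `H ⊗ H` into the last two factors of `(H ⊗ H) ⊗ H`. -/
def ι₂₃ : H ⊗[F] H →ₐ[F] (H ⊗[F] H) ⊗[F] H :=
  Algebra.TensorProduct.map Algebra.TensorProduct.includeRight (AlgHom.id F H)

/-- Embedding of `H ⊗ H` into the outer factors of `(H ⊗ H) ⊗ H`. -/
def ι₁₃ : H ⊗[F] H →ₐ[F] (H ⊗[F] H) ⊗[F] H :=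
  Algebra.TensorProduct.map Algebra.TensorProduct.includeLeft (AlgHom.id F H)

/-- The image in `(H⊗H)ˣ` of a unit under the flip map. -/
def uflip (R : (H ⊗[F] H)ˣ) : (H ⊗[F] H)ˣ :=
  ⟨τ₂ F H ↑R, τ₂ F H ↑R⁻¹,
    by rw [← map_mul, Units.mul_inv, map_one],
    by rw [← map_mul, Units.inv_mul, map_one]⟩

/-- Conjugation by a unit, as an algebra automorphism. -/
def Ad {A : Type*} [Ring A] [Algebra F A] (u : Aˣ) : A ≃ₐ[F] A where
  toFun x := ↑u * x * ↑u⁻¹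
  invFun x := ↑u⁻¹ * x * ↑u
  left_inv x := by simp [mul_assoc]
  right_inv x := by simp [mul_assoc]
  map_mul' x y := by simp [mul_assoc]
  map_add' x y := by rw [mul_add, add_mul]
  commutes' r := by rw [← Algebra.commutes, mul_assoc, Units.mul_inv, mul_one]

/-- The unit `(g ⊗ g)` of `H ⊗ H` attached to a unit `g` of `H`. -/
def uTmul (g : Hˣ) : (H ⊗[F] H)ˣ :=
  ⟨(↑g : H) ⊗ₜ[F] (↑g : H), (↑g⁻¹ : H) ⊗ₜ[F] (↑g⁻¹ : H),
    by rw [Algebra.TensorProduct.tmul_mul_tmul, Units.mul_inv, ← Algebra.TensorProduct.one_def],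
    by rw [Algebra.TensorProduct.tmul_mul_tmul, Units.inv_mul, ← Algebra.TensorProduct.one_def]⟩

/-- The comultiplication of the bialgebra `H`. -/
def Δ : H →ₐ[F] H ⊗[F] H := Bialgebra.comulAlgHom F H

/-- The counit of the bialgebra `H`. -/
def ε : H →ₐ[F] F := Bialgebra.counitAlgHom F H

/-- The opposite comultiplication `Δ^op = flip ∘ Δ`. -/
def Δop : H →ₐ[F] H ⊗[F] H := (τ₂ F H).toAlgHom.comp (Δ F H)

/-- `(Δ ⊗ id)` as a map `H ⊗ H → (H ⊗ H) ⊗ H`. -/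
def Δ₁ : H ⊗[F] H →ₐ[F] (H ⊗[F] H) ⊗[F] H :=
  Algebra.TensorProduct.map (Δ F H) (AlgHom.id F H)

/-- `(id ⊗ Δ)`, reassociated into `(H ⊗ H) ⊗ H`. -/
def Δ₂ : H ⊗[F] H →ₐ[F] (H ⊗[F] H) ⊗[F] H :=
  ((Algebra.TensorProduct.assoc F F F H H H).symm.toAlgHom).comp
    (Algebra.TensorProduct.map (AlgHom.id F H) (Δ F H))

/-- Quasitriangularity of an invertible `R ∈ H ⊗ H` with respect to a coproduct `Δ'`:
`R Δ'(x) = Δ'^op(x) R`, `(Δ'⊗id)(R) = R₁₃R₂₃` and `(id⊗Δ')(R) = R₁₃R₁₂`. -/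
def IsQuasiTri (Δ' : H →ₐ[F] H ⊗[F] H) (R : (H ⊗[F] H)ˣ) : Prop :=
  (∀ x : H, (↑R : H ⊗[F] H) * Δ' x = τ₂ F H (Δ' x) * ↑R) ∧
  (Algebra.TensorProduct.map Δ' (AlgHom.id F H)) (↑R : H ⊗[F] H)
      = ι₁₃ F H ↑R * ι₂₃ F H ↑R ∧
  ((Algebra.TensorProduct.assoc F F F H H H).symm
      ((Algebra.TensorProduct.map (AlgHom.id F H) Δ') (↑R : H ⊗[F] H)))
      = ι₁₃ F H ↑R * ι₁₂ F H ↑R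

/-- The unit of `H ⊗ H` obtained by applying `Δ` to a unit of `H`. -/
def uComul (g : Hˣ) : (H ⊗[F] H)ˣ :=
  ⟨Δ F H ↑g, Δ F H ↑g⁻¹,
    by rw [← map_mul, Units.mul_inv, map_one],
    by rw [← map_mul, Units.inv_mul, map_one]⟩

/-- A Drinfeld twist: an invertible `J ∈ H ⊗ H` with `(ε⊗id)(J) = 1 = (id⊗ε)(J)`
satisfying the cocycle identity `(J⊗1)(Δ⊗id)(J) = (1⊗J)(id⊗Δ)(J)`. -/
def IsTwist (J : (H ⊗[F] H)ˣ) : Prop :=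
  (Algebra.TensorProduct.lid F H)
      ((Algebra.TensorProduct.map (ε F H) (AlgHom.id F H)) ↑J) = 1 ∧
  (Algebra.TensorProduct.rid F F H)
      ((Algebra.TensorProduct.map (AlgHom.id F H) (ε F H)) ↑J) = 1 ∧
  ι₁₂ F H ↑J * Δ₁ F H ↑J = ι₂₃ F H ↑J * Δ₂ F H ↑J

/-- A twist pair `(ψ, J)`: `Δ^{op,ψ} = Ad(J) ∘ Δ` and `(ψ⊗ψ)(R₂₁) = J₂₁ R J⁻¹`. -/
def TwistPair (R : (H ⊗[F] H)ˣ) (ψ : H ≃ₐ[F] H) (J : (H ⊗[F] H)ˣ) : Prop :=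
  (∀ x : H, (Algebra.TensorProduct.map ψ.toAlgHom ψ.toAlgHom)
      (τ₂ F H (Δ F H (ψ.symm x))) = ↑J * Δ F H x * ↑J⁻¹) ∧
  ((Algebra.TensorProduct.map ψ.toAlgHom ψ.toAlgHom) (τ₂ F H ↑R)
      = ↑(uflip F H J) * ↑R * ↑J⁻¹)


lemma tau_tau (x : H ⊗[F] H) : τ₂ F H (τ₂ F H x) = x := by
  induction x using TensorProduct.induction_on with
  | zero => simp
  | tmul a c => simp [τ₂]
  | add x y hx hy => simp [map_add, hx, hy]

lemma map_refl_id (x : H ⊗[F] H) :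
    (Algebra.TensorProduct.map (AlgEquiv.refl : H ≃ₐ[F] H).toAlgHom (AlgHom.id F H)) x = x := by
  induction x using TensorProduct.induction_on with
  | zero => simp
  | tmul a c => simp
  | add x y hx hy => simp [map_add, hx, hy]

lemma map_refl_refl (x : H ⊗[F] H) :
    (Algebra.TensorProduct.map (AlgEquiv.refl : H ≃ₐ[F] H).toAlgHom
      (AlgEquiv.refl : H ≃ₐ[F] H).toAlgHom) x = x := by
  induction x using TensorProduct.induction_on with
  | zero => simp
  | tmul a c => simp
  | add x y hx hy => simp [map_add, hx, hy]

lemma central_tmul (c : H) (hc : ∀ x : H, c * x = x * c) (x : H ⊗[F] H) :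
    ((c ⊗ₜ[F] (1:H)) * x = x * (c ⊗ₜ[F] (1:H))) ∧
    (((1:H) ⊗ₜ[F] c) * x = x * ((1:H) ⊗ₜ[F] c)) := by
  induction x using TensorProduct.induction_on with
  | zero => simp
  | tmul a d =>
    constructor <;>
      simp [Algebra.TensorProduct.tmul_mul_tmul, hc a, hc d]
  | add x y hx hy =>
    exact ⟨by rw [mul_add, add_mul, hx.1, hy.1], by rw [mul_add, add_mul, hx.2, hy.2]⟩

/-- a balance `b` (invertible central, `ε(b)=1`,
`Δ(b) = (b⊗b)R₂₁R`) makes `H` almost cylindrical with twist pair `(id, R₂₁⁻¹)`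
and k-matrix `k = b`; moreover all of `H` is cylindrically invariant. -/
theorem balance_gives_almost_cylindrical (R : (H ⊗[F] H)ˣ) (b : Hˣ)
    (hR : IsQuasiTri F H (Δ F H) R)
    (hcentral : ∀ x : H, ↑b * x = x * ↑b)
    (hcounit : ε F H ↑b = 1)
    (hcoprod : Δ F H ↑b = ((↑b : H) ⊗ₜ[F] (↑b : H)) * ↑(uflip F H R) * ↑R) :
    TwistPair F H R (AlgEquiv.refl : H ≃ₐ[F] H) (uflip F H R)⁻¹ ∧
    (Δ F H ↑b
      = ↑((uflip F H R)⁻¹)⁻¹ * ((1 : H) ⊗ₜ[F] (↑b : H))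
          * (Algebra.TensorProduct.map (AlgEquiv.refl : H ≃ₐ[F] H).toAlgHom
              (AlgHom.id F H)) ↑R
          * ((↑b : H) ⊗ₜ[F] (1 : H))) ∧
    (∀ x : H, ↑b * x = (AlgEquiv.refl : H ≃ₐ[F] H) x * ↑b) := by
  have hJ : (↑(uflip F H R)⁻¹ : H ⊗[F] H) = τ₂ F H (↑R⁻¹ : H ⊗[F] H) := rfl
  have hJi : (↑((uflip F H R)⁻¹)⁻¹ : H ⊗[F] H) = τ₂ F H (↑R : H ⊗[F] H) := rfl
  refine ⟨⟨?_, ?_⟩, ?_, ?_⟩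
  · intro x
    rw [map_refl_refl, hJ, hJi]
    show τ₂ F H (Δ F H x) = _
    have h := congrArg (τ₂ F H) (hR.1 x)
    rw [map_mul, map_mul, tau_tau] at h
    -- h : τ₂ R * τ₂ (Δ x) = Δ x * τ₂ R
    have hinv : τ₂ F H (↑R⁻¹ : H ⊗[F] H) * τ₂ F H (↑R : H ⊗[F] H) = 1 := by
      rw [← map_mul, Units.inv_mul, map_one]
    calc τ₂ F H (Δ F H x)
        = 1 * τ₂ F H (Δ F H x) := by rw [one_mul]
      _ = τ₂ F H (↑R⁻¹ : H ⊗[F] H) * (τ₂ F H (↑R : H ⊗[F] H) * τ₂ F H (Δ F H x)) := by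
          rw [← mul_assoc, hinv]
      _ = τ₂ F H (↑R⁻¹ : H ⊗[F] H) * Δ F H x * τ₂ F H (↑R : H ⊗[F] H) := by
          rw [h, mul_assoc]
  · rw [map_refl_refl]
    have h1 : (↑(uflip F H (uflip F H R)⁻¹) : H ⊗[F] H) = (↑R⁻¹ : H ⊗[F] H) := by
      show τ₂ F H (τ₂ F H (↑R⁻¹ : H ⊗[F] H)) = _
      rw [tau_tau]
    rw [h1, hJi, Units.inv_mul, one_mul]
  · rw [map_refl_id, hJi, hcoprod]
    have hb1 := central_tmul F H (↑b : H) hcentral (↑R : H ⊗[F] H)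
    have hbb : ((↑b : H) ⊗ₜ[F] (↑b : H)) = ((1:H) ⊗ₜ[F] (↑b : H)) * ((↑b : H) ⊗ₜ[F] (1:H)) := by
      rw [Algebra.TensorProduct.tmul_mul_tmul, one_mul, mul_one]
    have hflip : (↑(uflip F H R) : H ⊗[F] H) = τ₂ F H (↑R : H ⊗[F] H) := rfl
    have hb2 := central_tmul F H (↑b : H) hcentral (τ₂ F H (↑R : H ⊗[F] H))
    rw [hbb, hflip]
    conv_rhs => rw [mul_assoc, ← hb1.1, ← mul_assoc]
    rw [mul_assoc ((1:H) ⊗ₜ[F] (↑b : H)), hb2.1, ← mul_assoc, hb2.2]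
  · intro x
    exact hcentral x


end
end

section
/- Let (H,R) be a quasitriangular bialgebra with half-balance h, i.e. invertible h ∈ H with h² central, ε(h)=1 and Δ(h) = (h⊗h)·R. Then R·Δ(h)·R⁻¹ = Δ^op(h), R·(h⊗h) = (h⊗h)·R₂₁, and h² is a balance for (H,R), i.e. Δ(h²) = (h²⊗h²)·R₂₁·R. -/
noncomputable section
open TensorProduct

variable (F : Type*) [CommRing F] (H : Type*) [Ring H] [Bialgebra F H]

/-- for a half-balance `h` (invertible, `h²` central, `ε(h)=1`,
`Δ(h)=(h⊗h)R`) one has `R·Δ(h)·R⁻¹ = Δ^op(h)`, `R·(h⊗h) = (h⊗h)·R₂₁` and `h²`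
is a balance: it is central, has counit `1` and `Δ(h²) = (h²⊗h²)·R₂₁·R`. -/
theorem half_balance_properties (R : (H ⊗[F] H)ˣ) (h : Hˣ)
    (hR : IsQuasiTri F H (Δ F H) R)
    (hc : ∀ x : H, (↑h * ↑h : H) * x = x * (↑h * ↑h))
    (hcounit : ε F H ↑h = 1)
    (hcoprod : Δ F H ↑h = ((↑h : H) ⊗ₜ[F] (↑h : H)) * ↑R) :
    (↑R * Δ F H ↑h * ↑R⁻¹ = Δop F H ↑h) ∧
    (↑R * ((↑h : H) ⊗ₜ[F] (↑h : H)) = ((↑h : H) ⊗ₜ[F] (↑h : H)) * ↑(uflip F H R)) ∧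
    (∀ x : H, (↑h * ↑h : H) * x = x * (↑h * ↑h)) ∧
    (ε F H (↑h * ↑h : H) = 1) ∧
    (Δ F H (↑h * ↑h : H)
        = ((↑h * ↑h : H) ⊗ₜ[F] (↑h * ↑h : H)) * ↑(uflip F H R) * ↑R) := by
  have key : (↑R : H ⊗[F] H) * Δ F H ↑h = Δop F H ↑h * ↑R := hR.1 _
  have h1 : (↑R : H ⊗[F] H) * Δ F H ↑h * ↑R⁻¹ = Δop F H ↑h := by
    rw [key, mul_assoc, Units.mul_inv, mul_one]
  have hop : Δop F H (↑h : H) = ((↑h : H) ⊗ₜ[F] (↑h : H)) * ↑(uflip F H R) := by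
    show (τ₂ F H) (Δ F H ↑h) = _
    rw [hcoprod, map_mul]
    rfl
  have h2 : (↑R : H ⊗[F] H) * ((↑h : H) ⊗ₜ[F] (↑h : H))
      = ((↑h : H) ⊗ₜ[F] (↑h : H)) * ↑(uflip F H R) := by
    have k2 := key
    rw [hcoprod, hop] at k2
    have := congrArg (· * (↑R⁻¹ : H ⊗[F] H)) k2
    simpa [mul_assoc, Units.mul_inv] using this
  refine ⟨h1, h2, hc, ?_, ?_⟩
  · rw [map_mul, hcounit, mul_one]
  · rw [map_mul, hcoprod]
    calc ((↑h : H) ⊗ₜ[F] (↑h : H)) * ↑R * (((↑h : H) ⊗ₜ[F] (↑h : H)) * ↑R)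
        = ((↑h : H) ⊗ₜ[F] (↑h : H)) * ((↑R : H ⊗[F] H) * ((↑h : H) ⊗ₜ[F] (↑h : H))) * ↑R := by
          simp [mul_assoc]
      _ = ((↑h : H) ⊗ₜ[F] (↑h : H)) * (((↑h : H) ⊗ₜ[F] (↑h : H)) * ↑(uflip F H R)) * ↑R := by
          rw [h2]
      _ = ((↑h * ↑h : H) ⊗ₜ[F] (↑h * ↑h : H)) * ↑(uflip F H R) * ↑R := by
          rw [← mul_assoc, Algebra.TensorProduct.tmul_mul_tmul]

end
end

section
/- If (H,R) is a cylindrical bialgebra, i.e. there is a quasitriangular bialgebra automorphism φ of (H,R) and an invertible k ∈ H with Δ(k) = R₂₁·(1⊗k)·(φ⊗id)(R)·(k⊗1), then (φ, R₂₁⁻¹) is a twist pair and (H,R) is almost cylindrical with k-matrix k. -/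
noncomputable section
open TensorProduct

variable (F : Type*) [CommRing F] (H : Type*) [Ring H] [Bialgebra F H]

lemma map_τ₂ (φ : H ≃ₐ[F] H) (z : H ⊗[F] H) :
    (Algebra.TensorProduct.map φ.toAlgHom φ.toAlgHom) (τ₂ F H z)
      = τ₂ F H ((Algebra.TensorProduct.map φ.toAlgHom φ.toAlgHom) z) := by
  induction z using TensorProduct.induction_on with
  | zero => simp
  | tmul a b => simp [τ₂]
  | add x y hx hy => simp only [map_add, hx, hy]

lemma ττ (z : H ⊗[F] H) : τ₂ F H (τ₂ F H z) = z := by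
  induction z using TensorProduct.induction_on with
  | zero => simp
  | tmul a b => simp [τ₂]
  | add x y hx hy => simp only [map_add, hx, hy]

/-- a cylindrical bialgebra (a quasitriangular bialgebra
automorphism `φ` and invertible `k` with `Δ(k)=R₂₁(1⊗k)(φ⊗id)(R)(k⊗1)`) is
almost cylindrical: `(φ, R₂₁⁻¹)` is a twist pair and `k` satisfies the
corresponding coproduct identity. -/
theorem cylindrical_is_almost_cylindrical (R : (H ⊗[F] H)ˣ)
    (hR : IsQuasiTri F H (Δ F H) R)
    (φ : H ≃ₐ[F] H)
    (hφΔ : ∀ x : H, Δ F H (φ x)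
        = (Algebra.TensorProduct.map φ.toAlgHom φ.toAlgHom) (Δ F H x))
    (hφR : (Algebra.TensorProduct.map φ.toAlgHom φ.toAlgHom) ↑R = (↑R : H ⊗[F] H))
    (k : Hˣ)
    (hk : Δ F H ↑k
        = ↑(uflip F H R) * ((1 : H) ⊗ₜ[F] (↑k : H))
            * (Algebra.TensorProduct.map φ.toAlgHom (AlgHom.id F H)) ↑R
            * ((↑k : H) ⊗ₜ[F] (1 : H))) :
    TwistPair F H R φ (uflip F H R)⁻¹ ∧
    (Δ F H ↑k
        = ↑((uflip F H R)⁻¹)⁻¹ * ((1 : H) ⊗ₜ[F] (↑k : H))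
            * (Algebra.TensorProduct.map φ.toAlgHom (AlgHom.id F H)) ↑R
            * ((↑k : H) ⊗ₜ[F] (1 : H))) := by
  obtain ⟨hqt1, -, -⟩ := hR
  have hJ : (↑((uflip F H R)⁻¹) : H ⊗[F] H) = τ₂ F H ↑R⁻¹ := rfl
  have hJi : (↑((uflip F H R)⁻¹)⁻¹ : H ⊗[F] H) = τ₂ F H ↑R := by rw [inv_inv]; rfl
  refine ⟨⟨?_, ?_⟩, ?_⟩
  · intro x
    rw [map_τ₂, ← hφΔ, φ.apply_symm_apply, hJ, hJi]
    have h := congrArg (τ₂ F H) (hqt1 x)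
    rw [map_mul, map_mul, ττ] at h
    -- h : τ₂ R * τ₂ (Δ x) = Δ x * τ₂ R
    have hinv : τ₂ F H (↑R⁻¹ : H ⊗[F] H) * τ₂ F H (↑R : H ⊗[F] H) = 1 := by
      rw [← map_mul, Units.inv_mul, map_one]
    calc τ₂ F H (Δ F H x)
        = (τ₂ F H ↑R⁻¹ * τ₂ F H ↑R) * τ₂ F H (Δ F H x) := by rw [hinv, one_mul]
      _ = τ₂ F H ↑R⁻¹ * (τ₂ F H ↑R * τ₂ F H (Δ F H x)) := by rw [mul_assoc]
      _ = τ₂ F H ↑R⁻¹ * (Δ F H x * τ₂ F H ↑R) := by rw [h]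
      _ = τ₂ F H ↑R⁻¹ * Δ F H x * τ₂ F H ↑R := by rw [mul_assoc]
  · rw [map_τ₂, hφR, hJi]
    have huf : (↑(uflip F H ((uflip F H R)⁻¹)) : H ⊗[F] H) = ↑R⁻¹ := by
      show τ₂ F H (↑((uflip F H R)⁻¹) : H ⊗[F] H) = ↑R⁻¹
      rw [hJ, ττ]
    rw [huf, Units.inv_mul, one_mul]
  · rw [inv_inv]; exact hk

end
end

section
/- Let (H,R) be a quasitriangular bialgebra, B ⊆ H a subalgebra, (ψ,J) a twist pair and k an invertible element satisfying the coproduct identity Δ(k)=J⁻¹(1⊗k)(ψ⊗id)(R)(k⊗1) and k·b = ψ(b)·k for all b ∈ B. Then for n = 2, the assignments σ₀ ↦ (ψ⁻¹⊗id) ∘ (multiplication by k⊗1) and σ₁ ↦ (flip) ∘ (multiplication by R) define operators on H⊗H satisfying the type B braid relation σ₀σ₁σ₀σ₁ = σ₁σ₀σ₁σ₀. -/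
noncomputable section
open TensorProduct

variable (F : Type*) [CommRing F] (H : Type*) [Ring H] [Bialgebra F H]

/-- The operator `σ₀ = (ψ⁻¹ ⊗ id) ∘ (left multiplication by k ⊗ 1)` on `H ⊗ H`. -/
def σ₀ (ψ : H ≃ₐ[F] H) (k : Hˣ) : H ⊗[F] H →ₗ[F] H ⊗[F] H :=
  (Algebra.TensorProduct.map ψ.symm.toAlgHom (AlgHom.id F H)).toLinearMap ∘ₗ
    LinearMap.mulLeft F ((↑k : H) ⊗ₜ[F] (1 : H))

/-- The operator `σ₁ = flip ∘ (left multiplication by R)` on `H ⊗ H`. -/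
def σ₁ (R : (H ⊗[F] H)ˣ) : H ⊗[F] H →ₗ[F] H ⊗[F] H :=
  (τ₂ F H).toLinearMap ∘ₗ LinearMap.mulLeft F (↑R : H ⊗[F] H)


/-- Auxiliary: flip commutes with `map f g` by swapping the legs. -/
lemma tau_map (f g : H →ₐ[F] H) (x : H ⊗[F] H) :
    τ₂ F H (Algebra.TensorProduct.map f g x)
      = Algebra.TensorProduct.map g f (τ₂ F H x) := by
  induction x using TensorProduct.induction_on with
  | zero => simp
  | tmul a b => simp [τ₂]
  | add a b ha hb => simp_all [map_add]

/-- Auxiliary: composition of tensor-product maps. -/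
lemma map_map (f₁ g₁ f₂ g₂ : H →ₐ[F] H) (x : H ⊗[F] H) :
    Algebra.TensorProduct.map f₂ g₂ (Algebra.TensorProduct.map f₁ g₁ x)
      = Algebra.TensorProduct.map (f₂.comp f₁) (g₂.comp g₁) x := by
  induction x using TensorProduct.induction_on with
  | zero => simp
  | tmul a b => simp
  | add a b ha hb => simp_all [map_add]

lemma comp_symm' (ψ : H ≃ₐ[F] H) : ψ.toAlgHom.comp ψ.symm.toAlgHom = AlgHom.id F H := by
  ext x; simp

lemma symm_comp' (ψ : H ≃ₐ[F] H) : ψ.symm.toAlgHom.comp ψ.toAlgHom = AlgHom.id F H := by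
  ext x; simp

lemma map_id_id (x : H ⊗[F] H) :
    Algebra.TensorProduct.map (AlgHom.id F H) (AlgHom.id F H) x = x := by
  rw [Algebra.TensorProduct.map_id]; rfl

/-- for an almost cylindrical bialgebra with cylindrically
invariant subalgebra `B`, the operators `σ₀` and `σ₁` on `H ⊗ H` satisfy the
type `B` braid relation `σ₀σ₁σ₀σ₁ = σ₁σ₀σ₁σ₀`. -/
theorem type_B_braid_relation (R J : (H ⊗[F] H)ˣ) (ψ : H ≃ₐ[F] H) (k : Hˣ)
    (B : Subalgebra F H)
    (hR : IsQuasiTri F H (Δ F H) R) (hJ : IsTwist F H J)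
    (hpair : TwistPair F H R ψ J)
    (hk : Δ F H ↑k
        = ↑J⁻¹ * ((1 : H) ⊗ₜ[F] (↑k : H))
            * (Algebra.TensorProduct.map ψ.toAlgHom (AlgHom.id F H)) ↑R
            * ((↑k : H) ⊗ₜ[F] (1 : H)))
    (hB : ∀ b ∈ B, (↑k : H) * b = ψ b * ↑k) :
    σ₀ F H ψ k ∘ₗ σ₁ F H R ∘ₗ σ₀ F H ψ k ∘ₗ σ₁ F H R
      = σ₁ F H R ∘ₗ σ₀ F H ψ k ∘ₗ σ₁ F H R ∘ₗ σ₀ F H ψ k := by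
  obtain ⟨hR1, -, -⟩ := hR
  obtain ⟨-, hpair2⟩ := hpair
  -- notation
  set r : H ⊗[F] H := (↑R : H ⊗[F] H) with hr
  set kk : H := (↑k : H) with hkk
  set T : H ⊗[F] H →ₐ[F] H ⊗[F] H :=
    Algebra.TensorProduct.map ψ.symm.toAlgHom (AlgHom.id F H) with hTdef
  set Φ : H ⊗[F] H →ₐ[F] H ⊗[F] H :=
    Algebra.TensorProduct.map ψ.toAlgHom ψ.toAlgHom with hΦdef
  set Ψ : H ⊗[F] H →ₐ[F] H ⊗[F] H :=
    Algebra.TensorProduct.map ψ.symm.toAlgHom ψ.symm.toAlgHom with hΨdef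
  have hΨΦ : ∀ x : H ⊗[F] H, Ψ (Φ x) = x := by
    intro x
    rw [hΦdef, hΨdef, map_map, symm_comp', map_id_id]
  have hΦinj : Function.Injective Φ := Function.LeftInverse.injective (g := Ψ) hΨΦ
  set A : H ⊗[F] H := kk ⊗ₜ[F] (1 : H) with hA
  set Bk : H ⊗[F] H := (1 : H) ⊗ₜ[F] kk with hBk
  set Rψ : H ⊗[F] H :=
    Algebra.TensorProduct.map ψ.toAlgHom (AlgHom.id F H) r with hRψ
  set m1 : H ⊗[F] H →ₐ[F] H ⊗[F] H :=
    Algebra.TensorProduct.map (AlgHom.id F H) ψ.toAlgHom with hm1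
  have hτRψ : τ₂ F H Rψ = m1 (τ₂ F H r) := by rw [hRψ, tau_map, hm1]
  have hτA : τ₂ F H A = Bk := by simp [hA, hBk, τ₂]
  have hτB : τ₂ F H Bk = A := by simp [hA, hBk, τ₂]
  have hJflip : (↑(uflip F H J) : H ⊗[F] H) = τ₂ F H ↑J := rfl
  have key : Φ (τ₂ F H r) * (Bk * (Rψ * A)) = A * (m1 (τ₂ F H r) * (Bk * r)) := by
    calc Φ (τ₂ F H r) * (Bk * (Rψ * A))
        = τ₂ F H ↑J * (r * ((↑J⁻¹ : H ⊗[F] H) * (Bk * (Rψ * A)))) := by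
          rw [hpair2, hJflip]; simp only [mul_assoc]
      _ = τ₂ F H ↑J * (r * Δ F H kk) := by rw [hk]; simp only [mul_assoc]
      _ = τ₂ F H ↑J * (τ₂ F H (Δ F H kk) * r) := by rw [hR1 kk]
      _ = τ₂ F H (↑J * Δ F H kk) * r := by rw [map_mul, mul_assoc]
      _ = τ₂ F H (Bk * (Rψ * A)) * r := by
          congr 2
          rw [hk]
          simp only [← mul_assoc]
          rw [Units.mul_inv, one_mul]
      _ = A * (m1 (τ₂ F H r) * (Bk * r)) := by
          rw [map_mul, map_mul, hτRψ, hτA, hτB]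
          simp only [mul_assoc]
  have hΦΨ : ∀ x : H ⊗[F] H, Φ (Ψ x) = x := by
    intro x
    rw [hΦdef, hΨdef, map_map, comp_symm', map_id_id]
  set m2 : H ⊗[F] H →ₐ[F] H ⊗[F] H :=
    Algebra.TensorProduct.map (AlgHom.id F H) ψ.symm.toAlgHom with hm2
  have g1 : ∀ y : H ⊗[F] H, τ₂ F H (T y) = m2 (τ₂ F H y) := by
    intro y; rw [hTdef, tau_map, hm2]
  have g2 : ∀ y : H ⊗[F] H, T (m2 y) = Ψ y := by
    intro y; rw [hTdef, hm2, hΨdef, map_map, AlgHom.comp_id, AlgHom.id_comp]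
  have g3 : ∀ y : H ⊗[F] H, m2 (T y) = Ψ y := by
    intro y; rw [hTdef, hm2, hΨdef, map_map, AlgHom.comp_id, AlgHom.id_comp]
  have g4 : ∀ y : H ⊗[F] H, T (τ₂ F H (T (τ₂ F H y))) = Ψ y := by
    intro y; rw [g1, tau_tau, g2]
  have g5 : ∀ y : H ⊗[F] H, τ₂ F H (T (τ₂ F H (T y))) = Ψ y := by
    intro y; rw [g1, tau_tau, g3]
  have g6 : τ₂ F H (T (τ₂ F H r)) = m2 r := by rw [g1, tau_tau]
  have e1 : T (kk ⊗ₜ[F] (1 : H)) = ψ.symm kk ⊗ₜ[F] (1 : H) := by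
    rw [hTdef]; simp
  have e2 : τ₂ F H (ψ.symm kk ⊗ₜ[F] (1 : H)) = (1 : H) ⊗ₜ[F] ψ.symm kk := by
    simp [τ₂]
  have e3 : T ((1 : H) ⊗ₜ[F] ψ.symm kk) = (1 : H) ⊗ₜ[F] ψ.symm kk := by
    rw [hTdef]; simp
  have e4 : τ₂ F H ((1 : H) ⊗ₜ[F] ψ.symm kk) = ψ.symm kk ⊗ₜ[F] (1 : H) := by
    simp [τ₂]
  have p1 : Φ (ψ.symm kk ⊗ₜ[F] (1 : H)) = A := by rw [hΦdef, hA]; simp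
  have p2 : ∀ y : H ⊗[F] H, Φ (T y) = m1 y := by
    intro y; rw [hΦdef, hTdef, hm1, map_map, comp_symm', AlgHom.comp_id]
  have p3 : Φ ((1 : H) ⊗ₜ[F] ψ.symm kk) = Bk := by rw [hΦdef, hBk]; simp
  have p5 : Φ (m2 r) = Rψ := by
    rw [hΦdef, hm2, hRψ, map_map, comp_symm', AlgHom.comp_id]
  apply LinearMap.ext; intro x
  simp only [σ₀, σ₁, LinearMap.comp_apply, LinearMap.mulLeft_apply,
    AlgHom.toLinearMap_apply, AlgEquiv.toLinearMap_apply, map_mul]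
  rw [← hTdef, ← hr, ← hkk]
  rw [e1, e2, e3, e4, g4 r, g4 x, g5 x, g6]
  simp only [← mul_assoc]
  congr 1
  apply hΦinj
  simp only [map_mul, p1, p2, p3, p5, hΦΨ]
  simp only [mul_assoc]
  exact key.symm


end
end
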